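/- arXiv:2005.07253 — 7 statements merged into one kernel-verified Lean document; each statement's English description precedes it below -/
import Mathlib

section
/- Let u : ℕ → ℝ be strictly decreasing with u(0) > 0 and u(k) → −∞ as k → ∞. Then the function g(x) = Σ_{k=0}^∞ x^k u(k), defined for x ∈ [0,1), has a unique root Λ̄ ∈ (0,1): g is positive on [0,Λ̄), zero at Λ̄, and negative on (Λ̄,1). (In particular g(0) = u(0) > 0 and g(x) → −∞ as x → 1⁻.) -/
open Filter Set Topology

/-- The function `g x = ∑ x^k u k` has a unique root `Λ̄ ∈ (0,1)`;
`g` is positive before the root and negative after. -/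
theorem stmt2 (u : ℕ → ℝ) (hu : StrictAnti u) (hu0 : 0 < u 0)
    (hlim : Filter.Tendsto u Filter.atTop Filter.atBot)
    (hsummable : ∀ x : ℝ, 0 ≤ x → x < 1 → Summable fun k : ℕ => x ^ k * u k) :
    ∃! Λ : ℝ, Λ ∈ Set.Ioo (0 : ℝ) 1 ∧ (∑' k : ℕ, Λ ^ k * u k) = 0 ∧
      (∀ x : ℝ, 0 ≤ x → x < Λ → 0 < ∑' k : ℕ, x ^ k * u k) ∧
      (∀ x : ℝ, Λ < x → x < 1 → (∑' k : ℕ, x ^ k * u k) < 0) := by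
  classical
  set v : ℕ → ℝ := fun k => Nat.rec (u 0) (fun n _ => u (n + 1) - u n) k with hv
  have hv0 : v 0 = u 0 := rfl
  have hvs : ∀ k, v (k + 1) = u (k + 1) - u k := fun k => rfl
  have hvneg : ∀ k, v (k + 1) < 0 := fun k => sub_neg.mpr (hu (Nat.lt_succ_self k))
  -- summabilities
  have hsum1 : ∀ x : ℝ, 0 ≤ x → x < 1 → Summable (fun k : ℕ => x ^ (k + 1) * u (k + 1)) := by
    intro x hx hx1
    exact (summable_nat_add_iff 1).mpr (hsummable x hx hx1)
  have hsum2 : ∀ x : ℝ, 0 ≤ x → x < 1 → Summable (fun k : ℕ => x ^ (k + 1) * u k) := by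
    intro x hx hx1
    have h := (hsummable x hx hx1).mul_left x
    refine h.congr fun k => ?_
    ring
  have hsumv : ∀ x : ℝ, 0 ≤ x → x < 1 → Summable (fun k : ℕ => x ^ k * v k) := by
    intro x hx hx1
    refine (summable_nat_add_iff 1).mp ?_
    have h : Summable (fun k : ℕ => x ^ (k + 1) * u (k + 1) - x ^ (k + 1) * u k) :=
      (hsum1 x hx hx1).sub (hsum2 x hx hx1)
    refine h.congr fun k => ?_
    rw [hvs]; ring
  -- key identity: H x = (1 - x) * g x
  have key : ∀ x : ℝ, 0 ≤ x → x < 1 →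
      (∑' k : ℕ, x ^ k * v k) = (1 - x) * ∑' k : ℕ, x ^ k * u k := by
    intro x hx hx1
    have hS := hsummable x hx hx1
    have h1 := hsum1 x hx hx1
    have h2 := hsum2 x hx hx1
    have e1 : (∑' k : ℕ, x ^ k * v k) = x ^ 0 * v 0 + ∑' k : ℕ, x ^ (k + 1) * v (k + 1) :=
      Summable.tsum_eq_zero_add (hsumv x hx hx1)
    have e2 : (∑' k : ℕ, x ^ (k + 1) * v (k + 1))
        = (∑' k : ℕ, x ^ (k + 1) * u (k + 1)) - ∑' k : ℕ, x ^ (k + 1) * u k := by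
      rw [← Summable.tsum_sub h1 h2]
      congr 1; funext k; rw [hvs]; ring
    have e3 : (∑' k : ℕ, x ^ k * u k) = x ^ 0 * u 0 + ∑' k : ℕ, x ^ (k + 1) * u (k + 1) :=
      Summable.tsum_eq_zero_add hS
    have e4 : (∑' k : ℕ, x ^ (k + 1) * u k) = x * ∑' k : ℕ, x ^ k * u k := by
      rw [← tsum_mul_left]
      congr 1; funext k; ring
    have hT : (∑' k : ℕ, x ^ (k + 1) * u (k + 1)) = (∑' k : ℕ, x ^ k * u k) - u 0 := by
      rw [e3]; simp
    rw [e1, e2, e4, hT, hv0]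
    simp only [pow_zero, one_mul]
    ring
  -- strict antitonicity of H on [0,1)
  have hanti : ∀ x y : ℝ, 0 ≤ x → x < y → y < 1 →
      (∑' k : ℕ, y ^ k * v k) < ∑' k : ℕ, x ^ k * v k := by
    intro x y hx hxy hy1
    refine Summable.tsum_lt_tsum (i := 1) ?_ ?_ (hsumv y (hx.trans hxy.le) hy1)
      (hsumv x hx (hxy.trans hy1))
    · intro k
      cases k with
      | zero => simp
      | succ k =>
        have hpow : x ^ (k + 1) ≤ y ^ (k + 1) := pow_le_pow_left₀ hx hxy.le _
        exact mul_le_mul_of_nonpos_right hpow (hvneg k).le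
    · have : y * v 1 < x * v 1 := mul_lt_mul_of_neg_right hxy (hvneg 0)
      simpa using this
  -- continuity of H on [0, r]
  have hcont : ∀ r : ℝ, 0 ≤ r → r < 1 →
      ContinuousOn (fun x : ℝ => ∑' k : ℕ, x ^ k * v k) (Icc 0 r) := by
    intro r hr hr1
    rw [continuousOn_iff_continuous_restrict]
    refine continuous_tsum (f := fun (k : ℕ) (x : Icc (0:ℝ) r) => (x : ℝ) ^ k * v k)
      (fun k => by fun_prop) ((hsumv r hr hr1).abs) ?_
    intro k x
    have hx0 : (0:ℝ) ≤ (x : ℝ) := x.2.1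
    have hxr : (x : ℝ) ≤ r := x.2.2
    rw [Real.norm_eq_abs, abs_mul, abs_of_nonneg (pow_nonneg hx0 k), abs_mul,
      abs_of_nonneg (pow_nonneg hr k)]
    exact mul_le_mul_of_nonneg_right (pow_le_pow_left₀ hx0 hxr k) (abs_nonneg _)
  -- H 0 = u 0 > 0
  have hH0 : (∑' k : ℕ, (0:ℝ) ^ k * v k) = u 0 := by
    rw [tsum_eq_single 0 (fun k hk => by simp [zero_pow hk])]
    simp [hv0]
  -- find x₁ ∈ (0,1) with H x₁ < 0
  obtain ⟨N, hN⟩ : ∃ N, u N < 0 := (hlim.eventually (eventually_lt_atBot 0)).exists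
  set p : ℝ → ℝ := fun x => ∑ k ∈ Finset.range (N + 1), x ^ k * v k with hp
  have hpcont : Continuous p := by fun_prop
  have hp1 : p 1 = u N := by
    simp only [hp, one_pow, one_mul]
    rw [Finset.sum_range_succ']
    simp only [hvs, hv0, Finset.sum_range_sub (f := u)]
    ring
  have hplt : p 1 < 0 := by rw [hp1]; exact hN
  have hev : ∀ᶠ x in 𝓝 (1:ℝ), p x < 0 :=
    Filter.Tendsto.eventually_lt_const hplt (hpcont.tendsto 1)
  have hev2 : ∀ᶠ x in 𝓝 (1:ℝ), (0:ℝ) < x := eventually_gt_nhds one_pos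
  have hevw : ∀ᶠ x in 𝓝[<] (1:ℝ), p x < 0 ∧ 0 < x ∧ x < 1 := by
    have h1 : ∀ᶠ x in 𝓝[<] (1:ℝ), p x < 0 := nhdsWithin_le_nhds hev
    have h2 : ∀ᶠ x in 𝓝[<] (1:ℝ), (0:ℝ) < x := nhdsWithin_le_nhds hev2
    have h3 : ∀ᶠ x in 𝓝[<] (1:ℝ), x < 1 := eventually_mem_nhdsWithin
    filter_upwards [h1, h2, h3] with x ha hb hc using ⟨ha, hb, hc⟩
  obtain ⟨x₁, hpx₁, hx₁0, hx₁1⟩ := hevw.exists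
  have hHx1 : (∑' k : ℕ, x₁ ^ k * v k) < 0 := by
    have hsum := hsumv x₁ hx₁0.le hx₁1
    have hsplit := Summable.sum_add_tsum_nat_add (f := fun k : ℕ => x₁ ^ k * v k) (N + 1) hsum
    have htail : (∑' k : ℕ, x₁ ^ (k + (N + 1)) * v (k + (N + 1))) ≤ 0 := by
      refine tsum_nonpos fun k => ?_
      exact mul_nonpos_iff.mpr (Or.inl ⟨pow_nonneg hx₁0.le _, (hvneg (k + N)).le⟩)
    have : p x₁ + (∑' k : ℕ, x₁ ^ (k + (N + 1)) * v (k + (N + 1)))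
        = ∑' k : ℕ, x₁ ^ k * v k := hsplit
    linarith
  -- IVT
  have hΛ := intermediate_value_Icc' hx₁0.le (hcont x₁ hx₁0.le hx₁1)
  have h0mem : (0:ℝ) ∈ Icc (∑' k : ℕ, x₁ ^ k * v k) (∑' k : ℕ, (0:ℝ) ^ k * v k) :=
    ⟨hHx1.le, by rw [hH0]; exact hu0.le⟩
  obtain ⟨Λ, hΛmem, hHΛ⟩ := hΛ h0mem
  change (∑' k : ℕ, Λ ^ k * v k) = 0 at hHΛ
  have hΛ0 : 0 < Λ := by
    rcases hΛmem.1.lt_or_eq with h | h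
    · exact h
    · exfalso
      rw [← h, hH0] at hHΛ; linarith
  have hΛ1 : Λ < 1 := lt_of_le_of_lt hΛmem.2 hx₁1
  -- g Λ = 0
  have hgΛ : (∑' k : ℕ, Λ ^ k * u k) = 0 := by
    have hk := key Λ hΛ0.le hΛ1
    rw [hHΛ] at hk
    rcases mul_eq_zero.mp hk.symm with h | h
    · exfalso; linarith
    · exact h
  -- sign properties
  have hpos : ∀ x : ℝ, 0 ≤ x → x < Λ → 0 < ∑' k : ℕ, x ^ k * u k := by
    intro x hx hxΛ
    have hH : 0 < ∑' k : ℕ, x ^ k * v k := by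
      have := hanti x Λ hx hxΛ hΛ1
      rw [hHΛ] at this; exact this
    rw [key x hx (hxΛ.trans hΛ1)] at hH
    rcases mul_pos_iff.mp hH with ⟨_, h⟩ | ⟨h, _⟩
    · exact h
    · exfalso; have : x < 1 := hxΛ.trans hΛ1; linarith
  have hneg : ∀ x : ℝ, Λ < x → x < 1 → (∑' k : ℕ, x ^ k * u k) < 0 := by
    intro x hΛx hx1
    have hH : (∑' k : ℕ, x ^ k * v k) < 0 := by
      have := hanti Λ x hΛ0.le hΛx hx1
      rw [hHΛ] at this; exact this
    rw [key x (hΛ0.le.trans hΛx.le) hx1] at hH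
    rcases mul_neg_iff.mp hH with ⟨_, h⟩ | ⟨h, _⟩
    · exact h
    · exfalso; linarith
  refine ⟨Λ, ⟨⟨hΛ0, hΛ1⟩, hgΛ, hpos, hneg⟩, ?_⟩
  rintro y ⟨⟨hy0, hy1⟩, hgy, hypos, hyneg⟩
  rcases lt_trichotomy y Λ with h | h | h
  · exfalso
    have := hpos y hy0.le h
    linarith [hgy ▸ this]
  · exact h
  · exfalso
    have := hneg y h hy1
    linarith [hgy ▸ this]
end

section
/- Let u : ℕ → ℝ be decreasing with u(0) > 0, let m_fi be the least k with u(k) < 0, and let 0 < λ_L < 1. Then Σ_{n=0}^∞ (1 − λ_L) λ_L^n u(n) < (1 − λ_L^{m_fi+1}) · (Σ_{n=0}^{m_fi−1} λ_L^n u(n)) / (Σ_{n=0}^{m_fi} λ_L^n). -/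
/-- the no-information welfare is strictly less than
`(1 - λ_L^{m_fi+1})` times the full-information welfare (homogeneous setting). -/
theorem stmt6 (u : ℕ → ℝ) (lamL : ℝ) (mfi : ℕ)
    (hu : StrictAnti u) (hu0 : 0 < u 0)
    (hmfi : u mfi < 0) (hmfi' : ∀ k < mfi, 0 ≤ u k)
    (hl0 : 0 < lamL) (hl1 : lamL < 1)
    (hsum : Summable fun n : ℕ => lamL ^ n * u n) :
    ∑' n : ℕ, (1 - lamL) * lamL ^ n * u n <
      (1 - lamL ^ (mfi + 1)) *
        ((∑ n ∈ Finset.range mfi, lamL ^ n * u n) /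
          (∑ n ∈ Finset.range (mfi + 1), lamL ^ n)) := by
  have hl1' : (1 : ℝ) - lamL > 0 := by linarith
  -- geometric sum
  have hT : ∑ n ∈ Finset.range (mfi + 1), lamL ^ n = (1 - lamL ^ (mfi + 1)) / (1 - lamL) := by
    rw [geom_sum_eq (by linarith : lamL ≠ 1), div_eq_div_iff (by linarith) (by linarith)]
    ring
  have hpow : lamL ^ (mfi + 1) < 1 := pow_lt_one₀ hl0.le hl1 (Nat.succ_ne_zero _)
  have hTpos : (0:ℝ) < 1 - lamL ^ (mfi + 1) := by linarith
  have hRHS : (1 - lamL ^ (mfi + 1)) *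
        ((∑ n ∈ Finset.range mfi, lamL ^ n * u n) /
          (∑ n ∈ Finset.range (mfi + 1), lamL ^ n)) =
      (1 - lamL) * ∑ n ∈ Finset.range mfi, lamL ^ n * u n := by
    rw [hT]
    field_simp
  rw [hRHS]
  have hLHS : ∑' n : ℕ, (1 - lamL) * lamL ^ n * u n
      = (1 - lamL) * ∑' n : ℕ, lamL ^ n * u n := by
    rw [← tsum_mul_left]
    exact tsum_congr fun n => by ring
  rw [hLHS]
  apply mul_lt_mul_of_pos_left _ hl1'
  -- split the tsum
  have hsplit := (Summable.sum_add_tsum_nat_add mfi hsum).symm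
  rw [hsplit]
  have htail : Summable fun n : ℕ => lamL ^ (n + mfi) * u (n + mfi) :=
    (summable_nat_add_iff mfi).mpr hsum
  have hneg : ∑' n : ℕ, lamL ^ (n + mfi) * u (n + mfi) < 0 := by
    have h0 : ∀ n : ℕ, lamL ^ (n + mfi) * u (n + mfi) ≤ 0 := by
      intro n
      have : u (n + mfi) ≤ u mfi := by
        rcases Nat.eq_zero_or_pos n with h | h
        · simp [h]
        · exact (hu (by omega : mfi < n + mfi)).le
      exact mul_nonpos_of_nonneg_of_nonpos (pow_nonneg hl0.le _) (by linarith)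
    have hstrict : lamL ^ (0 + mfi) * u (0 + mfi) < 0 := by
      simp only [Nat.zero_add]
      exact mul_neg_of_pos_of_neg (pow_pos hl0 _) hmfi
    calc ∑' n : ℕ, lamL ^ (n + mfi) * u (n + mfi)
        < ∑' _ : ℕ, (0:ℝ) := by
          apply Summable.tsum_lt_tsum (i := 0) h0 hstrict htail (by simp [summable_zero])
      _ = 0 := by simp
  linarith
end

section
/- Let 0 < λ_H ≤ λ ≤ 1 with λ_L = λ − λ_H > 0, and suppose Σ_{k=0}^∞ λ_H^k u(k) converges for a strictly decreasing u with u(0) > 0 and u(k) → −∞. For m ∈ ℕ define L(m) = λ_L · (λ^m Σ_{k=0}^∞ λ_H^k u(m+k)) / (Σ_{k=0}^{m} λ^k + λ^m λ_H/(1−λ_H)). Then: if L(m) ≥ 0 then L(m+1) < L(m); and if L(m) < 0 then L(m+1) < 0. Consequently L is strictly decreasing while nonnegative and stays negative thereafter. -/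
/-- the LEAVE functional `L(m)` over integer thresholds is strictly
decreasing while nonnegative, and stays negative thereafter. -/
theorem stmt9 (u : ℕ → ℝ) (lam lamH lamL : ℝ) (L : ℕ → ℝ)
    (hH0 : 0 < lamH) (hHl : lamH ≤ lam) (hl1 : lam ≤ 1)
    (hlamL : lamL = lam - lamH) (hL0 : 0 < lamL)
    (hu : StrictAnti u) (hu0 : 0 < u 0)
    (hlim : Filter.Tendsto u Filter.atTop Filter.atBot)
    (hsum : Summable fun k : ℕ => lamH ^ k * u k)
    (hLdef : ∀ m : ℕ, L m = lamL * (lam ^ m * ∑' k : ℕ, lamH ^ k * u (m + k)) /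
        (∑ k ∈ Finset.range (m + 1), lam ^ k + lam ^ m * lamH / (1 - lamH))) :
    ∀ m : ℕ, (0 ≤ L m → L (m + 1) < L m) ∧ (L m < 0 → L (m + 1) < 0) := by
  have hH1 : lamH < 1 := by nlinarith
  have hl0 : 0 < lam := lt_of_lt_of_le hH0 hHl
  have hc1 : (0:ℝ) < 1 - lamH := by linarith
  obtain ⟨S, hSdef⟩ : ∃ S : ℕ → ℝ, S = fun m => ∑' k : ℕ, lamH ^ k * u (m + k) :=
    ⟨_, rfl⟩
  obtain ⟨A, hAdef⟩ : ∃ A : ℕ → ℝ, A = fun m => ∑ k ∈ Finset.range (m + 1), lam ^ k :=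
    ⟨_, rfl⟩
  obtain ⟨D, hDdef⟩ : ∃ D : ℕ → ℝ, D = fun m => A m + lam ^ m * lamH / (1 - lamH) :=
    ⟨_, rfl⟩
  have hApos : ∀ m, 0 < A m := by
    intro m
    rw [hAdef]
    exact Finset.sum_pos (fun i _ => pow_pos hl0 i)
      ⟨0, Finset.mem_range.mpr (Nat.succ_pos m)⟩
  have hDm : ∀ m, D m = A m + lam ^ m * lamH / (1 - lamH) := by
    intro m; rw [hDdef]
  have hDgtA : ∀ m, A m < D m := by
    intro m
    have h : 0 < lam ^ m * lamH / (1 - lamH) := by positivity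
    rw [hDm m]; linarith
  have hDpos : ∀ m, 0 < D m := fun m => (hApos m).trans (hDgtA m)
  have hDrec : ∀ m, D (m + 1) = D m + lam ^ m * lamL / (1 - lamH) := by
    intro m
    rw [hDm m, hDm (m + 1), hAdef]
    simp only [Finset.sum_range_succ]
    rw [hlamL]
    field_simp
    ring
  -- summability of the shifted series
  have hsumm : ∀ m, Summable (fun k : ℕ => lamH ^ k * u (m + k)) := by
    intro m
    have h1 : Summable (fun k : ℕ => lamH ^ (k + m) * u (k + m)) :=
      (summable_nat_add_iff m).mpr hsum
    refine (h1.mul_left ((lamH ^ m)⁻¹)).congr fun k => ?_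
    have hne : lamH ^ m ≠ 0 := (pow_pos hH0 m).ne'
    rw [pow_add, add_comm m k]
    field_simp
  have hgeo : Summable (fun k : ℕ => lamH ^ k) :=
    summable_geometric_of_lt_one hH0.le hH1
  have hgeosum : (∑' k : ℕ, lamH ^ k) = (1 - lamH)⁻¹ :=
    tsum_geometric_of_lt_one hH0.le hH1
  have hSle : ∀ m, S m ≤ u m * (1 - lamH)⁻¹ := by
    intro m
    have hb : ∀ k : ℕ, lamH ^ k * u (m + k) ≤ lamH ^ k * u m := fun k =>
      mul_le_mul_of_nonneg_left (hu.antitone (Nat.le_add_right m k)) (pow_pos hH0 k).le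
    calc S m ≤ ∑' k : ℕ, lamH ^ k * u m := by
            rw [hSdef]
            exact Summable.tsum_le_tsum hb (hsumm m) (hgeo.mul_right _)
      _ = u m * (1 - lamH)⁻¹ := by rw [tsum_mul_right, hgeosum, mul_comm]
  have hSlt : ∀ m, S (m + 1) < u m * (1 - lamH)⁻¹ := by
    intro m
    refine lt_of_le_of_lt (hSle (m + 1)) ?_
    have h := hu (Nat.lt_succ_self m)
    have hinv : (0:ℝ) < (1 - lamH)⁻¹ := by positivity
    nlinarith
  have hSrec : ∀ m, S m = u m + lamH * S (m + 1) := by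
    intro m
    have h0 := Summable.tsum_eq_zero_add (hsumm m)
    simp only [hSdef]
    rw [h0]
    simp only [pow_zero, Nat.add_zero, one_mul]
    congr 1
    rw [← tsum_mul_left]
    apply tsum_congr
    intro k
    have hidx : m + (k + 1) = (m + 1) + k := by omega
    rw [hidx, pow_succ]
    ring
  -- L in terms of S
  have hLS : ∀ m, L m = lamL * lam ^ m / D m * S m := by
    intro m
    rw [hLdef m, hDm m]
    simp only [hAdef, hSdef]
    ring
  have hcoef : ∀ m, 0 < lamL * lam ^ m / D m := fun m =>
    div_pos (mul_pos hL0 (pow_pos hl0 m)) (hDpos m)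
  have hLneg : ∀ m, S m < 0 → L m < 0 := by
    intro m h
    rw [hLS m]
    exact mul_neg_of_pos_of_neg (hcoef m) h
  have hLnonneg : ∀ m, 0 ≤ L m → 0 ≤ S m := by
    intro m h
    by_contra hc
    push_neg at hc
    exact absurd h (not_le.mpr (hLneg m hc))
  have hSneg : ∀ m, L m < 0 → S m < 0 := by
    intro m h
    by_contra hc
    push_neg at hc
    have : 0 ≤ L m := by
      rw [hLS m]; exact mul_nonneg (hcoef m).le hc
    linarith
  -- key: S m < 0 → S (m+1) < 0
  have key2 : ∀ m, S m < 0 → S (m + 1) < 0 := by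
    intro m h
    by_cases hum : 0 < u m
    · have hr := hSrec m
      by_contra hc
      push_neg at hc
      nlinarith [mul_nonneg hH0.le hc]
    · push_neg at hum
      have h1 := hSle (m + 1)
      have h2 : u (m + 1) < 0 := lt_of_lt_of_le (hu (Nat.lt_succ_self m)) hum
      have hinv : (0:ℝ) < (1 - lamH)⁻¹ := by positivity
      nlinarith
  intro m
  constructor
  · -- decreasing while nonnegative
    intro hLm
    have hSm : 0 ≤ S m := hLnonneg m hLm
    by_cases hS1 : S (m + 1) < 0
    · exact lt_of_lt_of_le (hLneg (m + 1) hS1) hLm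
    · push_neg at hS1
      have hum : 0 < u m := by
        by_contra h
        push_neg at h
        have h1 := hSle (m + 1)
        have h2 : u (m + 1) < 0 := lt_of_lt_of_le (hu (Nat.lt_succ_self m)) h
        have hinv : (0:ℝ) < (1 - lamH)⁻¹ := by positivity
        nlinarith
      have hstrict := hSlt m
      have hq : lamL * (1 - lamH)⁻¹ ≤ 1 := by
        rw [← div_eq_mul_inv, div_le_one hc1]
        rw [hlamL]; linarith
      have step1 : lamL * A m * S (m + 1) < lamL * A m * (u m * (1 - lamH)⁻¹) :=
        mul_lt_mul_of_pos_left hstrict (mul_pos hL0 (hApos m))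
      have step2 : lamL * A m * (u m * (1 - lamH)⁻¹) ≤ A m * u m := by
        have heq : lamL * A m * (u m * (1 - lamH)⁻¹)
            = (lamL * (1 - lamH)⁻¹) * (A m * u m) := by ring
        rw [heq]
        nlinarith [mul_pos (hApos m) hum]
      have step3 : A m * u m < u m * D (m + 1) := by
        have hAD : A m < D (m + 1) := by
          have h1 := hDgtA m
          have h2 := hDrec m
          have h3 : 0 < lam ^ m * lamL / (1 - lamH) := by positivity
          linarith
        nlinarith
      have hid : S m * D (m + 1) - lam * S (m + 1) * D m
          = u m * D (m + 1) - lamL * A m * S (m + 1) := by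
        rw [hSrec m, hDrec m, hDm m, hlamL]
        field_simp
        ring
      have hcore : lam * S (m + 1) * D m < S m * D (m + 1) := by linarith
      rw [hLS (m + 1), hLS m, div_mul_eq_mul_div, div_mul_eq_mul_div,
        div_lt_div_iff₀ (hDpos (m + 1)) (hDpos m)]
      calc lamL * lam ^ (m + 1) * S (m + 1) * D m
          = lamL * lam ^ m * (lam * S (m + 1) * D m) := by rw [pow_succ]; ring
        _ < lamL * lam ^ m * (S m * D (m + 1)) :=
            mul_lt_mul_of_pos_left hcore (mul_pos hL0 (pow_pos hl0 m))
        _ = lamL * lam ^ m * S m * D (m + 1) := by ring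
  · -- stays negative
    intro hLm
    exact hLneg (m + 1) (key2 m (hSneg m hLm))
end

section
/- Let 0 ≤ λ_H < λ ≤ 1, and for m ∈ ℕ define Γ(m) = 1/(Σ_{k=0}^{m} λ^k + λ^m λ_H/(1−λ_H)), Λ(m) = Σ_{k=0}^{m−1} λ^k u(k), and Φ(m) = Γ(m)Λ(m), where u : ℕ → ℝ is strictly decreasing with u(0) > 0. Then Φ(1) > Φ(0), and for all m ≥ 1: if Φ(m) ≤ Φ(m−1) then Φ(m+1) ≤ Φ(m). Hence Φ is unimodal on ℕ: increasing up to its maximum and decreasing afterwards. -/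
/-- unimodality of the normalized low-need welfare `Φ = Γ * Λ`
over integer thresholds: `Φ 1 > Φ 0` and once `Φ` decreases it keeps decreasing. -/
theorem stmt10 (u : ℕ → ℝ) (lam lamH : ℝ)
    (hH0 : 0 ≤ lamH) (hHl : lamH < lam) (hl1 : lam ≤ 1)
    (hu : StrictAnti u) (hu0 : 0 < u 0)
    (Γ Λf Φ : ℕ → ℝ)
    (hΓ : ∀ m, Γ m = 1 / (∑ k ∈ Finset.range (m + 1), lam ^ k + lam ^ m * lamH / (1 - lamH)))
    (hΛ : ∀ m, Λf m = ∑ k ∈ Finset.range m, lam ^ k * u k)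
    (hΦ : ∀ m, Φ m = Γ m * Λf m) :
    Φ 0 < Φ 1 ∧ ∀ m : ℕ, 1 ≤ m → Φ m ≤ Φ (m - 1) → Φ (m + 1) ≤ Φ m := by
  have hlam : 0 < lam := lt_of_le_of_lt hH0 hHl
  have h1H : 0 < 1 - lamH := by linarith
  set a : ℝ := (lam - lamH) / (1 - lamH) with ha
  have hapos : 0 < a := div_pos (by linarith) h1H
  set D : ℕ → ℝ := fun m => ∑ k ∈ Finset.range (m + 1), lam ^ k + lam ^ m * lamH / (1 - lamH)
    with hD
  have hDpos : ∀ m, 0 < D m := by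
    intro m
    have h1 : 0 < ∑ k ∈ Finset.range (m + 1), lam ^ k :=
      Finset.sum_pos (fun k _ => pow_pos hlam k) (by simp)
    have h2 : 0 ≤ lam ^ m * lamH / (1 - lamH) :=
      div_nonneg (mul_nonneg (pow_pos hlam m).le hH0) h1H.le
    simpa [hD] using add_pos_of_pos_of_nonneg h1 h2
  have hDrec : ∀ m, D (m + 1) = D m + lam ^ m * a := by
    intro m
    simp only [hD, ha, Finset.sum_range_succ]
    field_simp
    ring
  have hΛrec : ∀ m, Λf (m + 1) = Λf m + lam ^ m * u m := by
    intro m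
    rw [hΛ, hΛ, Finset.sum_range_succ]
  have hΦ' : ∀ m, Φ m = Λf m / D m := by
    intro m
    rw [hΦ, hΓ]
    simp only [hD]
    ring
  have hΛ0 : Λf 0 = 0 := by simp [hΛ]
  constructor
  · rw [hΦ' 0, hΦ' 1, hΛ0, hΛ 1]
    simp only [Finset.sum_range_one, pow_zero, one_mul, zero_div]
    exact div_pos hu0 (hDpos 1)
  · rintro m hm h
    obtain ⟨n, rfl⟩ : ∃ n, m = n + 1 := ⟨m - 1, (Nat.succ_pred_eq_of_pos hm).symm⟩
    simp only [Nat.add_sub_cancel] at h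
    rw [hΦ', hΦ', div_le_div_iff₀ (hDpos _) (hDpos _)] at h
    have hpn : 0 < lam ^ n := pow_pos hlam n
    have key : u n * D n ≤ a * Λf n := by
      rw [hΛrec, hDrec] at h
      have h2 : lam ^ n * (u n * D n) ≤ lam ^ n * (a * Λf n) := by nlinarith [h]
      exact le_of_mul_le_mul_left h2 hpn
    have key2 : u (n + 1) * D (n + 1) ≤ a * Λf (n + 1) := by
      have hun : u (n + 1) < u n := hu (Nat.lt_succ_self n)
      calc u (n + 1) * D (n + 1) = u (n + 1) * D n + u (n + 1) * (lam ^ n * a) := by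
            rw [hDrec]; ring
        _ ≤ u n * D n + u n * (lam ^ n * a) := by
            exact add_le_add (mul_le_mul_of_nonneg_right hun.le (hDpos n).le)
              (mul_le_mul_of_nonneg_right hun.le (mul_pos hpn hapos).le)
        _ ≤ a * Λf n + a * (lam ^ n * u n) := add_le_add key (le_of_eq (by ring))
        _ = a * Λf (n + 1) := by rw [hΛrec]; ring
    rw [hΦ', hΦ', div_le_div_iff₀ (hDpos _) (hDpos _), hΛrec (n + 1), hDrec (n + 1)]
    have hpn1 : 0 < lam ^ (n + 1) := pow_pos hlam (n + 1)
    nlinarith [key2, hpn1]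
end

section
/- With Γ, Λ, Φ as in the unimodality setup (Γ(m) = 1/(Σ_{k≤m} λ^k + λ^m λ_H/(1−λ_H)), Λ(m) = Σ_{k<m} λ^k u(k), Φ = ΓΛ), the finite differences satisfy: Γ(m) − Γ(m−1) = −λ^{m−1} ((λ−λ_H)/(1−λ_H)) Γ(m)Γ(m−1), and Φ(m) − Φ(m−1) = λ^{m−1} Γ(m−1) (u(m−1) − ((λ−λ_H)/(1−λ_H)) Φ(m)). -/
/-- finite-difference identities for `Γ` and `Φ = Γ * Λ`. -/
theorem stmt11 (u : ℕ → ℝ) (lam lamH : ℝ)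
    (hH0 : 0 ≤ lamH) (hH1 : lamH < 1) (hHl : lamH ≤ lam) (hl1 : lam ≤ 1)
    (Γ Λf Φ : ℕ → ℝ)
    (hΓ : ∀ m, Γ m = 1 / (∑ k ∈ Finset.range (m + 1), lam ^ k + lam ^ m * lamH / (1 - lamH)))
    (hΛ : ∀ m, Λf m = ∑ k ∈ Finset.range m, lam ^ k * u k)
    (hΦ : ∀ m, Φ m = Γ m * Λf m) :
    ∀ m : ℕ,
      Γ (m + 1) - Γ m = -lam ^ m * ((lam - lamH) / (1 - lamH)) * (Γ (m + 1) * Γ m) ∧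
      Φ (m + 1) - Φ m = lam ^ m * Γ m * (u m - ((lam - lamH) / (1 - lamH)) * Φ (m + 1)) := by
  have hlam0 : (0:ℝ) ≤ lam := le_trans hH0 hHl
  have h1H : (0:ℝ) < 1 - lamH := by linarith
  have h1H' : (1:ℝ) - lamH ≠ 0 := ne_of_gt h1H
  -- denominator
  set D : ℕ → ℝ := fun m => ∑ k ∈ Finset.range (m + 1), lam ^ k + lam ^ m * lamH / (1 - lamH)
    with hD
  have hDpos : ∀ m, 0 < D m := by
    intro m
    have h1 : (1:ℝ) ≤ ∑ k ∈ Finset.range (m + 1), lam ^ k := by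
      have : lam ^ 0 ≤ ∑ k ∈ Finset.range (m + 1), lam ^ k :=
        Finset.single_le_sum (f := fun k => lam ^ k)
          (fun i _ => pow_nonneg hlam0 i) (Finset.mem_range.mpr (Nat.succ_pos m))
      simpa using this
    have h2 : 0 ≤ lam ^ m * lamH / (1 - lamH) := by
      apply div_nonneg (mul_nonneg (pow_nonneg hlam0 m) hH0) (le_of_lt h1H)
    have : (0:ℝ) < 1 + 0 := by norm_num
    simp only [hD]
    nlinarith
  have hDne : ∀ m, D m ≠ 0 := fun m => ne_of_gt (hDpos m)
  have hΓ' : ∀ m, Γ m = 1 / D m := hΓ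
  have hDsucc : ∀ m, D (m + 1) = D m + lam ^ m * ((lam - lamH) / (1 - lamH)) := by
    intro m
    simp only [hD, Finset.sum_range_succ]
    field_simp
    ring
  intro m
  have hΓm := hΓ' m
  have hΓm1 := hΓ' (m + 1)
  have hstep := hDsucc m
  have e2 : Γ m * D m = 1 := by rw [hΓm]; exact one_div_mul_cancel (hDne m)
  have e1 : Γ (m + 1) * (D m + lam ^ m * ((lam - lamH) / (1 - lamH))) = 1 := by
    rw [← hstep, hΓm1]; exact one_div_mul_cancel (hDne (m+1))
  have hGdiff : Γ (m + 1) - Γ m =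
      -lam ^ m * ((lam - lamH) / (1 - lamH)) * (Γ (m + 1) * Γ m) := by
    linear_combination Γ m * e1 - Γ (m + 1) * e2
  refine ⟨hGdiff, ?_⟩
  have hΛsucc : Λf (m + 1) = Λf m + lam ^ m * u m := by
    rw [hΛ, hΛ, Finset.sum_range_succ]
  have hΛm : Λf m = Λf (m + 1) - lam ^ m * u m := by linarith
  rw [hΦ, hΦ, hΛm]
  linear_combination Λf (m + 1) * hGdiff
end

section
/- Suppose Λ̄ ∈ (0,1) satisfies Σ_{k=0}^∞ Λ̄^k u(k) = 0 for a strictly decreasing u with u(0) > 0 and lim u(k) = −∞. Then for every λ_H ∈ [Λ̄, 1), Σ_{k=0}^∞ (1 − λ_H) λ_H^k u(k) ≤ 0; i.e., a low-need user weakly prefers the outside option (of value 0) to joining when the queue is M/M/1 with arrival rate λ_H. -/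
/-- for `λ_H ≥ Λ̄`, the expected joining utility of a low-need user
under the geometric `M/M/1` distribution with rate `λ_H` is nonpositive. -/
theorem stmt13 (u : ℕ → ℝ) (Λ : ℝ)
    (hu : StrictAnti u) (hu0 : 0 < u 0)
    (hlim : Filter.Tendsto u Filter.atTop Filter.atBot)
    (hsummable : ∀ x : ℝ, 0 ≤ x → x < 1 → Summable fun k : ℕ => x ^ k * u k)
    (hΛ : Λ ∈ Set.Ioo (0 : ℝ) 1) (hroot : ∑' k : ℕ, Λ ^ k * u k = 0) :
    ∀ lamH : ℝ, Λ ≤ lamH → lamH < 1 →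
      (∑' k : ℕ, (1 - lamH) * lamH ^ k * u k) ≤ 0 := by
  obtain ⟨hΛ0, hΛ1⟩ := hΛ
  intro lamH hle hlt
  have h0 : (0:ℝ) ≤ lamH := le_trans hΛ0.le hle
  set v : ℕ → ℝ := fun k => u k - u (k+1) with hv
  have hvnn : ∀ k, 0 ≤ v k := fun k => sub_nonneg.2 (hu (Nat.lt_succ_self k)).le
  have key : ∀ x : ℝ, 0 ≤ x → x < 1 →
      Summable (fun k : ℕ => x ^ (k+1) * v k) ∧
      (∑' k : ℕ, x ^ (k+1) * v k) = u 0 - (1 - x) * ∑' k : ℕ, x ^ k * u k := by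
    intro x hx0 hx1
    have hs := hsummable x hx0 hx1
    have hs1 : Summable (fun k : ℕ => x ^ (k+1) * u k) := by
      have := hs.mul_left x
      simpa [pow_succ, mul_comm, mul_assoc, mul_left_comm] using this
    have hs2 : Summable (fun k : ℕ => x ^ (k+1) * u (k+1)) :=
      (summable_nat_add_iff 1).2 hs
    have hrw : (fun k : ℕ => x ^ (k+1) * v k)
        = fun k : ℕ => x ^ (k+1) * u k - x ^ (k+1) * u (k+1) := by
      funext k; simp [hv, mul_sub]
    have hsum : Summable (fun k : ℕ => x ^ (k+1) * v k) := by
      rw [hrw]; exact hs1.sub hs2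
    refine ⟨hsum, ?_⟩
    have h1 : (∑' k : ℕ, x ^ (k+1) * u k) = x * ∑' k : ℕ, x ^ k * u k := by
      rw [← tsum_mul_left]
      congr 1; funext k; ring
    have h2 : (∑' k : ℕ, x ^ (k+1) * u (k+1))
        = (∑' k : ℕ, x ^ k * u k) - u 0 := by
      have := Summable.tsum_eq_zero_add hs
      simp only [pow_zero, one_mul] at this
      rw [this]; ring
    calc (∑' k : ℕ, x ^ (k+1) * v k)
        = ∑' k : ℕ, (x ^ (k+1) * u k - x ^ (k+1) * u (k+1)) := by rw [hrw]
      _ = (∑' k : ℕ, x ^ (k+1) * u k) - ∑' k : ℕ, x ^ (k+1) * u (k+1) :=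
          Summable.tsum_sub hs1 hs2
      _ = u 0 - (1 - x) * ∑' k : ℕ, x ^ k * u k := by rw [h1, h2]; ring
  obtain ⟨hsΛ, heΛ⟩ := key Λ hΛ0.le hΛ1
  obtain ⟨hsl, hel⟩ := key lamH h0 hlt
  have hΛval : (∑' k : ℕ, Λ ^ (k+1) * v k) = u 0 := by
    rw [heΛ, hroot]; ring
  have hmono : (∑' k : ℕ, Λ ^ (k+1) * v k) ≤ ∑' k : ℕ, lamH ^ (k+1) * v k := by
    refine Summable.tsum_le_tsum (fun k => ?_) hsΛ hsl
    exact mul_le_mul_of_nonneg_right (pow_le_pow_left₀ hΛ0.le hle _) (hvnn k)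
  have hfin : (1 - lamH) * (∑' k : ℕ, lamH ^ k * u k) ≤ 0 := by
    have := hmono
    rw [hΛval, hel] at this
    linarith
  calc (∑' k : ℕ, (1 - lamH) * lamH ^ k * u k)
      = (1 - lamH) * ∑' k : ℕ, lamH ^ k * u k := by
        rw [← tsum_mul_left]; congr 1; funext k; ring
    _ ≤ 0 := hfin
end

section
/- Let λ_H ∈ (0,1), λ = λ_L + λ_H ≤ 1 with λ_L > 0, and fix a threshold x = m + a with m ∈ ℕ, a ∈ [0,1). With the threshold steady state (π_k ∝ λ^k for k ≤ m, π_{m+1} = (λ_H + aλ_L)π_m, ratio λ_H beyond), the LEAVE functional equals L(x) = λ_L · [λ^m (1−a) u(m) + λ^m (λ_H + λ_L a) Σ_{k=1}^∞ λ_H^{k−1} u(m+k)] / [Σ_{k=0}^m λ^k + λ^m (λ_H + aλ_L)/(1−λ_H)], and for fixed m this expression is monotone in a ∈ [0,1) (being a ratio of two affine functions of a with positive denominator). -/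
/-- Ratio of two affine functions with positive denominator is monotone or antitone. -/
lemma ratio_affine_mono (A B C D : ℝ)
    (hden : ∀ b ∈ Set.Ico (0:ℝ) 1, 0 < C + D * b) :
    MonotoneOn (fun b : ℝ => (A + B * b) / (C + D * b)) (Set.Ico (0:ℝ) 1) ∨
      AntitoneOn (fun b : ℝ => (A + B * b) / (C + D * b)) (Set.Ico (0:ℝ) 1) := by
  rcases le_or_gt 0 (B * C - A * D) with h | h
  · left
    intro b1 hb1 b2 hb2 h12
    rw [div_le_div_iff₀ (hden b1 hb1) (hden b2 hb2)]
    nlinarith [mul_nonneg h (sub_nonneg.mpr h12)]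
  · right
    intro b1 hb1 b2 hb2 h12
    rw [div_le_div_iff₀ (hden b2 hb2) (hden b1 hb1)]
    nlinarith [mul_nonneg (le_of_lt (neg_pos.mpr h)) (sub_nonneg.mpr h12)]

/-- closed form of the LEAVE functional at a threshold `x = m + a`
steady state, and its monotonicity in `a` on `[0,1)`. -/
theorem stmt16 (u : ℕ → ℝ) (lam lamL lamH : ℝ) (m : ℕ) (a : ℝ) (π : ℕ → ℝ)
    (hH0 : 0 < lamH) (hH1 : lamH < 1) (hL0 : 0 < lamL)
    (hlam : lam = lamL + lamH) (hl1 : lam ≤ 1)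
    (hu : StrictAnti u)
    (hsum : Summable fun k : ℕ => lamH ^ k * u (m + 1 + k))
    (ha : 0 ≤ a) (ha1 : a < 1)
    (hπ0 : ∀ n, 0 ≤ π n) (hπ1 : ∑' n, π n = 1)
    (h1 : ∀ k < m, π (k + 1) = lam * π k)
    (h2 : π (m + 1) = (lamH + a * lamL) * π m)
    (h3 : ∀ k, m < k → π (k + 1) = lamH * π k) :
    (∑' n, (lam * π n - π (n + 1)) * u n) =
        lamL * (lam ^ m * (1 - a) * u m +
            lam ^ m * (lamH + lamL * a) * ∑' k : ℕ, lamH ^ k * u (m + 1 + k)) /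
          (∑ k ∈ Finset.range (m + 1), lam ^ k + lam ^ m * (lamH + a * lamL) / (1 - lamH)) ∧
      (MonotoneOn (fun b : ℝ =>
            lamL * (lam ^ m * (1 - b) * u m +
                lam ^ m * (lamH + lamL * b) * ∑' k : ℕ, lamH ^ k * u (m + 1 + k)) /
              (∑ k ∈ Finset.range (m + 1), lam ^ k + lam ^ m * (lamH + b * lamL) / (1 - lamH)))
          (Set.Ico (0 : ℝ) 1) ∨
        AntitoneOn (fun b : ℝ =>
            lamL * (lam ^ m * (1 - b) * u m +
                lam ^ m * (lamH + lamL * b) * ∑' k : ℕ, lamH ^ k * u (m + 1 + k)) /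
              (∑ k ∈ Finset.range (m + 1), lam ^ k + lam ^ m * (lamH + b * lamL) / (1 - lamH)))
          (Set.Ico (0 : ℝ) 1)) := by
  have hlam0 : 0 < lam := by rw [hlam]; linarith
  have hH1' : (0:ℝ) < 1 - lamH := by linarith
  set T := ∑' k : ℕ, lamH ^ k * u (m + 1 + k) with hT
  set S := ∑ k ∈ Finset.range (m + 1), lam ^ k with hS
  have hSpos : 0 < S := by
    rw [hS]
    apply Finset.sum_pos (fun i _ => pow_pos hlam0 i)
    exact ⟨0, Finset.mem_range.mpr (Nat.succ_pos m)⟩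
  -- π formulas
  have hπle : ∀ k ≤ m, π k = lam ^ k * π 0 := by
    intro k hk
    induction k with
    | zero => simp
    | succ n ih =>
      rw [h1 n (by omega), ih (by omega)]
      ring
  have hπtail : ∀ k, π (m + 1 + k) = lamH ^ k * π (m + 1) := by
    intro k
    induction k with
    | zero => simp
    | succ n ih =>
      have e : m + 1 + (n + 1) = (m + 1 + n) + 1 := by omega
      rw [e, h3 _ (by omega), ih]
      ring
  have hπm1 : π (m + 1) = (lamH + a * lamL) * (lam ^ m * π 0) := by
    rw [h2, hπle m le_rfl]
  -- summability of π
  have hπs : Summable π := by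
    by_contra h
    rw [tsum_eq_zero_of_not_summable h] at hπ1
    norm_num at hπ1
  have hgeo : ∑' k : ℕ, lamH ^ k = (1 - lamH)⁻¹ :=
    tsum_geometric_of_lt_one (le_of_lt hH0) hH1
  -- normalization: π 0 * D = 1
  set D := S + lam ^ m * (lamH + a * lamL) / (1 - lamH) with hD
  have hDpos : 0 < D := by
    rw [hD]
    have : 0 ≤ lam ^ m * (lamH + a * lamL) / (1 - lamH) := by
      apply div_nonneg _ (le_of_lt hH1')
      apply mul_nonneg (le_of_lt (pow_pos hlam0 m))
      nlinarith
    linarith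
  have hnorm : π 0 * D = 1 := by
    have hsplit := (Summable.sum_add_tsum_nat_add (f := π) (m + 1) hπs)
    have hfin : ∑ i ∈ Finset.range (m + 1), π i = π 0 * S := by
      rw [hS, Finset.mul_sum]
      apply Finset.sum_congr rfl
      intro i hi
      have hi' : i ≤ m := Nat.lt_succ_iff.mp (Finset.mem_range.mp hi)
      rw [hπle i hi']
      ring
    have htail : ∑' k : ℕ, π (k + (m + 1)) = π (m + 1) * (1 - lamH)⁻¹ := by
      calc ∑' k : ℕ, π (k + (m + 1)) = ∑' k : ℕ, π (m + 1) * lamH ^ k := by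
            apply tsum_congr
            intro k
            rw [show k + (m + 1) = m + 1 + k by omega, hπtail k]
            ring
        _ = π (m + 1) * (1 - lamH)⁻¹ := by rw [tsum_mul_left, hgeo]
    rw [hfin, htail, hπ1, hπm1] at hsplit
    rw [hD]
    field_simp at hsplit ⊢
    linarith [hsplit]
  have hπ0v : π 0 = 1 / D := by
    field_simp
    linarith [hnorm]
  constructor
  · -- closed form
    set f : ℕ → ℝ := fun n => (lam * π n - π (n + 1)) * u n with hf
    have hftail : ∀ k : ℕ, f (k + (m + 1)) =
        (lamL * π (m + 1)) * (lamH ^ k * u (m + 1 + k)) := by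
      intro k
      have e : k + (m + 1) = m + 1 + k := by omega
      have e2 : m + 1 + k + 1 = (m + 1 + k) + 1 := rfl
      rw [hf]
      simp only [e]
      rw [h3 (m + 1 + k) (by omega), hπtail k, hlam]
      ring
    have hfs : Summable f := by
      rw [← summable_nat_add_iff (m + 1)]
      apply Summable.congr (hsum.mul_left (lamL * π (m + 1)))
      intro k
      rw [hftail k]
    have hsplit := (Summable.sum_add_tsum_nat_add (f := f) (m + 1) hfs).symm
    have hfin : ∑ i ∈ Finset.range (m + 1), f i = lamL * (1 - a) * lam ^ m * π 0 * u m := by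
      rw [Finset.sum_range_succ]
      have hz : ∑ i ∈ Finset.range m, f i = 0 := by
        apply Finset.sum_eq_zero
        intro i hi
        rw [hf]
        simp only
        rw [h1 i (Finset.mem_range.mp hi)]
        ring
      rw [hz, zero_add, hf]
      simp only
      rw [hπm1, hπle m le_rfl, hlam]
      ring
    have htail : ∑' k : ℕ, f (k + (m + 1)) = lamL * π (m + 1) * T := by
      calc ∑' k : ℕ, f (k + (m + 1))
          = ∑' k : ℕ, (lamL * π (m + 1)) * (lamH ^ k * u (m + 1 + k)) :=
            tsum_congr hftail
        _ = lamL * π (m + 1) * T := by rw [tsum_mul_left, hT]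
    rw [hsplit, hfin, htail, hπm1, hπ0v]
    field_simp
  · -- monotonicity
    have key := ratio_affine_mono
      (lamL * (lam ^ m * u m + lam ^ m * lamH * T))
      (lamL * (lam ^ m * lamL * T - lam ^ m * u m))
      (S + lam ^ m * lamH / (1 - lamH))
      (lam ^ m * lamL / (1 - lamH))
      (by
        intro b hb
        have hb0 : (0:ℝ) ≤ b := hb.1
        have h1' : 0 < S + lam ^ m * lamH / (1 - lamH) := by
          have : 0 ≤ lam ^ m * lamH / (1 - lamH) :=
            div_nonneg (mul_nonneg (le_of_lt (pow_pos hlam0 m)) (le_of_lt hH0)) (le_of_lt hH1')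
          linarith
        have h2' : 0 ≤ lam ^ m * lamL / (1 - lamH) * b :=
          mul_nonneg (div_nonneg (mul_nonneg (le_of_lt (pow_pos hlam0 m)) (le_of_lt hL0))
            (le_of_lt hH1')) hb0
        linarith)
    have heq : (fun b : ℝ =>
        lamL * (lam ^ m * (1 - b) * u m + lam ^ m * (lamH + lamL * b) * T) /
          (S + lam ^ m * (lamH + b * lamL) / (1 - lamH))) =
        (fun b : ℝ =>
          ((lamL * (lam ^ m * u m + lam ^ m * lamH * T)) +
            (lamL * (lam ^ m * lamL * T - lam ^ m * u m)) * b) /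
          ((S + lam ^ m * lamH / (1 - lamH)) + (lam ^ m * lamL / (1 - lamH)) * b)) := by
      have hd : ∀ b : ℝ, S + lam ^ m * (lamH + b * lamL) / (1 - lamH) =
          S + lam ^ m * lamH / (1 - lamH) + lam ^ m * lamL / (1 - lamH) * b := by
        intro b; ring
      funext b
      rw [hd b]
      congr 1
      ring
    rw [heq]
    exact key
end
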